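/- Let X be uniform on the cross-polytope B_1^n (n ≥ 2) and i ≠ j. Then E[X_i^4] = 24/((n+1)(n+2)(n+3)(n+4)) and E[X_i^2 X_j^2] = 4/((n+1)(n+2)(n+3)(n+4)). -/

import Mathlib

open MeasureTheory Real Set

namespace CrossAux

variable {n : ℕ}

lemma measN_cont : Continuous (fun x : Fin n → ℝ => ∑ k, |x k|) :=
  continuous_finset_sum _ fun k _ => (continuous_apply k).abs

lemma meas_le (t : ℝ) : MeasurableSet {x : Fin n → ℝ | ∑ k, |x k| ≤ t} :=
  (isClosed_le measN_cont continuous_const).measurableSet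

lemma meas_lt (t : ℝ) : MeasurableSet {x : Fin n → ℝ | ∑ k, |x k| < t} :=
  (isOpen_lt measN_cont continuous_const).measurableSet

lemma vol_le [Nonempty (Fin n)] (t : ℝ) :
    volume {x : Fin n → ℝ | ∑ k, |x k| ≤ t}
      = ENNReal.ofReal t ^ n * ENNReal.ofReal (2 ^ n / Real.Gamma (n + 1)) := by
  have h := MeasureTheory.volume_sum_rpow_le (ι := Fin n) (p := 1) le_rfl t
  simp only [Real.rpow_one, one_div_one, Fintype.card_fin, Real.rpow_natCast] at h
  norm_num [Real.Gamma_two] at h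
  exact h

lemma vol_lt [Nonempty (Fin n)] (t : ℝ) :
    volume {x : Fin n → ℝ | ∑ k, |x k| < t}
      = ENNReal.ofReal t ^ n * ENNReal.ofReal (2 ^ n / Real.Gamma (n + 1)) := by
  have h := MeasureTheory.volume_sum_rpow_lt (ι := Fin n) (p := 1) le_rfl t
  simp only [Real.rpow_one, one_div_one, Fintype.card_fin, Real.rpow_natCast] at h
  norm_num [Real.Gamma_two] at h
  exact h

lemma lt_ae_le [Nonempty (Fin n)] (t : ℝ) :
    {x : Fin n → ℝ | ∑ k, |x k| < t} =ᵐ[volume] {x : Fin n → ℝ | ∑ k, |x k| ≤ t} := by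
  have hsub : {x : Fin n → ℝ | ∑ k, |x k| < t} ⊆ {x : Fin n → ℝ | ∑ k, |x k| ≤ t} :=
    Set.setOf_subset_setOf.mpr fun x => le_of_lt
  have hfin : volume {x : Fin n → ℝ | ∑ k, |x k| < t} ≠ ⊤ := by
    rw [vol_lt]
    exact ENNReal.mul_ne_top (ENNReal.pow_ne_top ENNReal.ofReal_ne_top) ENNReal.ofReal_ne_top
  have hdiff : volume ({x : Fin n → ℝ | ∑ k, |x k| ≤ t} \
      {x : Fin n → ℝ | ∑ k, |x k| < t}) = 0 := by
    rw [measure_diff hsub (meas_lt t).nullMeasurableSet hfin, vol_le, vol_lt, tsub_self]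
  rw [MeasureTheory.ae_eq_set]
  refine ⟨?_, hdiff⟩
  rw [Set.diff_eq_empty.mpr hsub, measure_empty]

lemma scale (d : ℕ) {g : (Fin n → ℝ) → ℝ} (hg : Measurable g)
    (hom : ∀ t : ℝ, 0 < t → ∀ x, g (t • x) = t ^ d * g x)
    {t : ℝ} (ht : 0 < t) :
    ∫⁻ x in {x : Fin n → ℝ | ∑ k, |x k| ≤ t}, ENNReal.ofReal (g x)
      = ENNReal.ofReal t ^ (n + d)
        * ∫⁻ x in {x : Fin n → ℝ | ∑ k, |x k| ≤ 1}, ENNReal.ofReal (g x) := by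
  have hφ : Measurable (fun x : Fin n → ℝ => t • x) := measurable_id.const_smul t
  have hG : Measurable fun x : Fin n → ℝ => ENNReal.ofReal (g x) :=
    ENNReal.measurable_ofReal.comp hg
  have hmap : Measure.map (fun x : Fin n → ℝ => t • x) volume
      = ENNReal.ofReal ((t ^ n)⁻¹) • volume := by
    have := Measure.map_addHaar_smul (μ := (volume : Measure (Fin n → ℝ)))
      (ne_of_gt ht)
    simpa [Module.finrank_pi, abs_of_pos, inv_pos, pow_pos ht] using this
  set F := Set.indicator {x : Fin n → ℝ | ∑ k, |x k| ≤ t}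
    (fun x => ENNReal.ofReal (g x)) with hF
  have hFmeas : Measurable F := hG.indicator (meas_le t)
  have key : ∫⁻ x, F (t • x) = ENNReal.ofReal ((t ^ n)⁻¹) * ∫⁻ x, F x := by
    rw [← lintegral_map hFmeas hφ, hmap, lintegral_smul_measure, smul_eq_mul]
  have hcomp : ∀ x : Fin n → ℝ, F (t • x)
      = Set.indicator {x : Fin n → ℝ | ∑ k, |x k| ≤ 1}
          (fun x => ENNReal.ofReal (t ^ d) * ENNReal.ofReal (g x)) x := by
    intro x
    have hmem : t • x ∈ {x : Fin n → ℝ | ∑ k, |x k| ≤ t}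
        ↔ x ∈ {x : Fin n → ℝ | ∑ k, |x k| ≤ 1} := by
      simp only [Set.mem_setOf_eq, Pi.smul_apply, smul_eq_mul, abs_mul,
        abs_of_pos ht, ← Finset.mul_sum]
      rw [mul_le_iff_le_one_right ht]
    by_cases h : x ∈ {x : Fin n → ℝ | ∑ k, |x k| ≤ 1}
    · simp only [hF]
      rw [Set.indicator_of_mem h, Set.indicator_of_mem (hmem.mpr h), hom t ht,
        ENNReal.ofReal_mul (by positivity)]
    · simp only [hF]
      rw [Set.indicator_of_notMem h, Set.indicator_of_notMem (fun hc => h (hmem.mp hc))]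
  rw [lintegral_congr hcomp] at key
  rw [lintegral_indicator (meas_le 1), lintegral_const_mul _ hG] at key
  have h1 : ∫⁻ x in {x : Fin n → ℝ | ∑ k, |x k| ≤ t}, ENNReal.ofReal (g x) = ∫⁻ x, F x :=
    (lintegral_indicator (meas_le t) _).symm
  have hinv : ENNReal.ofReal (t ^ n) * ENNReal.ofReal ((t ^ n)⁻¹) = 1 := by
    rw [← ENNReal.ofReal_mul (by positivity), mul_inv_cancel₀ (by positivity),
      ENNReal.ofReal_one]
  rw [h1]
  calc ∫⁻ x, F x = ENNReal.ofReal (t ^ n) * (ENNReal.ofReal ((t ^ n)⁻¹) * ∫⁻ x, F x) := by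
        rw [← mul_assoc, hinv, one_mul]
    _ = ENNReal.ofReal (t ^ n) * (ENNReal.ofReal (t ^ d)
          * ∫⁻ x in {x : Fin n → ℝ | ∑ k, |x k| ≤ 1}, ENNReal.ofReal (g x)) := by rw [key]
    _ = ENNReal.ofReal t ^ (n + d)
          * ∫⁻ x in {x : Fin n → ℝ | ∑ k, |x k| ≤ 1}, ENNReal.ofReal (g x) := by
        rw [pow_add, ENNReal.ofReal_pow ht.le, ENNReal.ofReal_pow ht.le, mul_assoc]


lemma integrableOn_pow_exp (m : ℕ) :
    IntegrableOn (fun x : ℝ => x ^ m * Real.exp (-x)) (Ioi 0) := by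
  have h := Real.GammaIntegral_convergent (s := (m : ℝ) + 1) (by positivity)
  simp only [add_sub_cancel_right, Real.rpow_natCast] at h
  exact h.congr_fun (fun x _ => mul_comm _ _) measurableSet_Ioi

lemma integral_Ioi_pow_exp (m : ℕ) :
    ∫ x in Ioi (0:ℝ), x ^ m * Real.exp (-x) = (Nat.factorial m : ℝ) := by
  have h := (Real.Gamma_eq_integral (s := (m : ℝ) + 1) (by positivity)).symm
  simp only [add_sub_cancel_right, Real.rpow_natCast] at h
  rw [show (fun x : ℝ => x ^ m * Real.exp (-x)) = fun x : ℝ => Real.exp (-x) * x ^ m by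
    funext x; ring]
  rw [h, Real.Gamma_nat_eq_factorial]

lemma key [Nonempty (Fin n)] (d : ℕ) {g : (Fin n → ℝ) → ℝ} (hg : Measurable g)
    (hgnn : ∀ x, 0 ≤ g x)
    (hom : ∀ t : ℝ, 0 < t → ∀ x, g (t • x) = t ^ d * g x) :
    ∫⁻ x : Fin n → ℝ, ENNReal.ofReal (g x * Real.exp (-∑ k, |x k|))
      = (Nat.factorial (n + d) : ENNReal)
        * ∫⁻ x in {x : Fin n → ℝ | ∑ k, |x k| ≤ 1}, ENNReal.ofReal (g x) := by
  set I := ∫⁻ x in {x : Fin n → ℝ | ∑ k, |x k| ≤ 1}, ENNReal.ofReal (g x) with hI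
  set N := fun x : Fin n → ℝ => ∑ k, |x k| with hN
  have hNnn : ∀ x, 0 ≤ N x := fun x => Finset.sum_nonneg fun k _ => abs_nonneg _
  have hNmeas : Measurable N := measN_cont.measurable
  have hEint : ∀ s : ℝ, IntegrableOn (fun t : ℝ => Real.exp (-t)) (Ioi s) := by
    intro s
    simpa using exp_neg_integrableOn_Ioi s zero_lt_one
  have hExp : ∀ s : ℝ, ENNReal.ofReal (Real.exp (-s))
      = ∫⁻ t in Ioi s, ENNReal.ofReal (Real.exp (-t)) := by
    intro s
    rw [← ofReal_integral_eq_lintegral_ofReal (hEint s)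
      (Filter.Eventually.of_forall fun t => (Real.exp_pos _).le), integral_exp_neg_Ioi]
  set f : (Fin n → ℝ) → ℝ → ENNReal := fun x t =>
    ({p : (Fin n → ℝ) × ℝ | N p.1 < p.2}.indicator
      (fun p => ENNReal.ofReal (g p.1) * ENNReal.ofReal (Real.exp (-p.2)))) (x, t) with hf
  have hSmeas : MeasurableSet {p : (Fin n → ℝ) × ℝ | N p.1 < p.2} :=
    (isOpen_lt (measN_cont.comp continuous_fst) continuous_snd).measurableSet
  have hfmeas : Measurable (Function.uncurry f) := by
    have : Function.uncurry f = ({p : (Fin n → ℝ) × ℝ | N p.1 < p.2}.indicator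
        (fun p => ENNReal.ofReal (g p.1) * ENNReal.ofReal (Real.exp (-p.2)))) := by
      funext p
      simp [Function.uncurry, hf]
    rw [this]
    exact Measurable.indicator
      (((ENNReal.measurable_ofReal.comp hg).comp measurable_fst).mul
        (ENNReal.measurable_ofReal.comp
          ((Real.measurable_exp.comp measurable_neg).comp measurable_snd))) hSmeas
  have step1 : ∫⁻ x : Fin n → ℝ, ENNReal.ofReal (g x * Real.exp (-N x))
      = ∫⁻ x, ∫⁻ t, f x t := by
    refine lintegral_congr fun x => ?_
    rw [ENNReal.ofReal_mul (hgnn x), hExp (N x),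
      ← lintegral_const_mul _ (by fun_prop : Measurable fun t : ℝ => ENNReal.ofReal (Real.exp (-t)))]
    rw [← lintegral_indicator (measurableSet_Ioi (a := N x))]
    refine lintegral_congr fun t => ?_
    by_cases h : N x < t
    · rw [Set.indicator_of_mem (by exact h : t ∈ Ioi (N x))]
      simp only [hf]
      rw [Set.indicator_of_mem (by exact h)]
    · rw [Set.indicator_of_notMem (by exact h : ¬ t ∈ Ioi (N x))]
      simp only [hf]
      rw [Set.indicator_of_notMem (by exact h)]
  have step2 : ∫⁻ x, ∫⁻ t, f x t = ∫⁻ t, ∫⁻ x, f x t :=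
    lintegral_lintegral_swap hfmeas.aemeasurable
  have step3 : ∀ t : ℝ, ∫⁻ x, f x t
      = ENNReal.ofReal (Real.exp (-t)) * ∫⁻ x in {x : Fin n → ℝ | N x < t},
          ENNReal.ofReal (g x) := by
    intro t
    rw [← lintegral_indicator (meas_lt t), ← lintegral_const_mul _
      (hg.ennreal_ofReal.indicator (meas_lt t))]
    refine lintegral_congr fun x => ?_
    by_cases h : N x < t
    · simp only [hf]
      rw [Set.indicator_of_mem (by exact h), Set.indicator_of_mem (by exact h),
        mul_comm]
    · simp only [hf]
      rw [Set.indicator_of_notMem (by exact h), Set.indicator_of_notMem (by exact h),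
        mul_zero]
  have step4 : ∀ t : ℝ, 0 < t →
      (∫⁻ x in {x : Fin n → ℝ | N x < t}, ENNReal.ofReal (g x))
        = ENNReal.ofReal t ^ (n + d) * I := by
    intro t ht
    rw [setLIntegral_congr (lt_ae_le t), scale d hg hom ht]
  have step5 : ∀ t : ℝ, t ≤ 0 → ∫⁻ x, f x t = 0 := by
    intro t ht
    rw [step3]
    have : {x : Fin n → ℝ | N x < t} = ∅ := by
      ext x
      simp only [Set.mem_setOf_eq, Set.mem_empty_iff_false, iff_false, not_lt]
      exact le_trans ht (hNnn x)
    rw [this]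
    simp
  rw [step1, step2]
  have split : ∫⁻ t, ∫⁻ x, f x t
      = ∫⁻ t in Ioi (0:ℝ), ∫⁻ x, f x t := by
    rw [← lintegral_add_compl (fun t => ∫⁻ x, f x t) (measurableSet_Ioi (a := (0:ℝ)))]
    have : ∫⁻ t in (Ioi (0:ℝ))ᶜ, ∫⁻ x, f x t = 0 := by
      rw [setLIntegral_congr_fun (measurableSet_Ioi (a := (0:ℝ))).compl
        (fun t (ht : t ∈ (Ioi (0:ℝ))ᶜ) =>
          step5 t (by simpa using ht))]
      simp
    rw [this, add_zero]
  rw [split]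
  have main : ∫⁻ t in Ioi (0:ℝ), ∫⁻ x, f x t
      = ∫⁻ t in Ioi (0:ℝ), ENNReal.ofReal (t ^ (n + d) * Real.exp (-t)) * I := by
    refine setLIntegral_congr_fun (measurableSet_Ioi (a := (0:ℝ)))
      (fun t (ht : t ∈ Ioi (0:ℝ)) => ?_)
    rw [step3, step4 t ht, ENNReal.ofReal_mul (pow_nonneg (le_of_lt ht) _),
      ENNReal.ofReal_pow (le_of_lt ht)]
    ring
  rw [main, lintegral_mul_const _ (by
    exact ENNReal.measurable_ofReal.comp ((measurable_id.pow_const _).mul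
      (Real.measurable_exp.comp measurable_neg)))]
  rw [← ofReal_integral_eq_lintegral_ofReal
      ((integrableOn_pow_exp (n + d)))
      ((ae_restrict_iff' measurableSet_Ioi).mpr (Filter.Eventually.of_forall
        fun t ht => by have h0 : (0:ℝ) < t := ht; positivity))]
  rw [integral_Ioi_pow_exp, ENNReal.ofReal_natCast, mul_comm]

lemma integrable_pow_exp_abs (m : ℕ) :
    Integrable (fun x : ℝ => |x| ^ m * Real.exp (-|x|)) := by
  have hIoi : IntegrableOn (fun x : ℝ => |x| ^ m * Real.exp (-|x|)) (Ioi 0) :=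
    (integrableOn_pow_exp m).congr_fun
      (fun x hx => by rw [abs_of_pos hx]) measurableSet_Ioi
  have hIci : IntegrableOn (fun x : ℝ => |x| ^ m * Real.exp (-|x|)) (Ici 0) := by
    rwa [integrableOn_Ici_iff_integrableOn_Ioi]
  have hIic : IntegrableOn (fun x : ℝ => |x| ^ m * Real.exp (-|x|)) (Iic 0) := by
    have A : MeasurableEmbedding fun x : ℝ => -x :=
      (Homeomorph.neg ℝ).isClosedEmbedding.measurableEmbedding
    have := (A.integrableOn_map_iff (μ := volume)
      (f := fun x : ℝ => |x| ^ m * Real.exp (-|x|)) (s := Iic (0:ℝ))).symm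
    rw [Measure.map_neg_eq_self] at this
    rw [← this]
    simpa [Function.comp_def] using hIci
  rw [← integrableOn_univ, ← Set.Iic_union_Ioi (a := (0:ℝ))]
  exact hIic.union hIoi

lemma integral_pow_exp_abs (m : ℕ) :
    ∫ x : ℝ, |x| ^ m * Real.exp (-|x|) = 2 * (Nat.factorial m : ℝ) := by
  have h := integral_comp_abs (f := fun y : ℝ => y ^ m * Real.exp (-y))
  simpa [integral_Ioi_pow_exp m] using h

lemma prod_lintegral (w : Fin n → ℝ → ℝ) (hint : ∀ k, Integrable (w k))
    (hnn : ∀ k u, 0 ≤ w k u) :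
    ∫⁻ x : Fin n → ℝ, ENNReal.ofReal (∏ k, w k (x k))
      = ENNReal.ofReal (∏ k, ∫ u, w k u) := by
  rw [← integral_fintype_prod_eq_prod (𝕜 := ℝ) (f := fun k => w k),
    ofReal_integral_eq_lintegral_ofReal (Integrable.fintype_prod hint)
      (Filter.Eventually.of_forall fun x => Finset.prod_nonneg fun k _ => hnn k (x k)),
    volume_pi]

lemma prod_exp_eq (x : Fin n → ℝ) (c : Fin n → ℕ) :
    ∏ k, (|x k| ^ c k * Real.exp (-|x k|))
      = (∏ k, |x k| ^ c k) * Real.exp (-∑ k, |x k|) := by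
  rw [Finset.prod_mul_distrib, ← Real.exp_sum, ← Finset.sum_neg_distrib]

lemma monomial_hom (c : Fin n → ℕ) {t : ℝ} (ht : 0 < t) (x : Fin n → ℝ) :
    (∏ k, |(t • x) k| ^ c k) = t ^ (∑ k, c k) * ∏ k, |x k| ^ c k := by
  rw [← Finset.prod_pow_eq_pow_sum, ← Finset.prod_mul_distrib]
  refine Finset.prod_congr rfl fun k _ => ?_
  rw [Pi.smul_apply, smul_eq_mul, abs_mul, abs_of_pos ht, mul_pow]

lemma moment [Nonempty (Fin n)] (c : Fin n → ℕ) :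
    (Nat.factorial (n + ∑ k, c k) : ENNReal)
      * ∫⁻ x in {x : Fin n → ℝ | ∑ k, |x k| ≤ 1}, ENNReal.ofReal (∏ k, |x k| ^ c k)
    = ENNReal.ofReal (∏ k, (2 * (Nat.factorial (c k) : ℝ))) := by
  have hg : Measurable fun x : Fin n → ℝ => ∏ k, |x k| ^ c k :=
    Finset.measurable_prod _ fun k _ => ((measurable_pi_apply k).abs.pow_const _)
  have hgnn : ∀ x : Fin n → ℝ, 0 ≤ ∏ k, |x k| ^ c k := fun x =>
    Finset.prod_nonneg fun k _ => pow_nonneg (abs_nonneg _) _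
  rw [← key (d := ∑ k, c k) hg hgnn (fun t ht x => monomial_hom c ht x)]
  have : ∀ x : Fin n → ℝ, ENNReal.ofReal ((∏ k, |x k| ^ c k) * Real.exp (-∑ k, |x k|))
      = ENNReal.ofReal (∏ k, (|x k| ^ c k * Real.exp (-|x k|))) := by
    intro x; rw [prod_exp_eq]
  rw [lintegral_congr this,
    prod_lintegral _ (fun k => integrable_pow_exp_abs (c k))
      (fun k u => by positivity)]
  congr 1
  exact Finset.prod_congr rfl fun k _ => integral_pow_exp_abs (c k)

lemma main_calc [Nonempty (Fin n)] (c : Fin n → ℕ) (hc : ∑ k, c k = 4)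
    {C : ℝ} (hC : ∏ k, (2 * (Nat.factorial (c k) : ℝ)) = C)
    {f : (Fin n → ℝ) → ℝ} (hfm : Measurable f)
    (hfe : ∀ x, f x = ∏ k, |x k| ^ c k) :
    ∫ x, f x ∂((volume {x : Fin n → ℝ | ∑ k, |x k| ≤ 1})⁻¹
        • volume.restrict {x : Fin n → ℝ | ∑ k, |x k| ≤ 1})
      = C * (Nat.factorial n : ℝ) / (2 ^ n * (Nat.factorial (n + 4) : ℝ)) := by
  have hCnn : 0 ≤ C := by
    rw [← hC]; exact Finset.prod_nonneg fun k _ => by positivity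
  have hfnn : ∀ x, 0 ≤ f x := fun x => (hfe x).symm ▸
    Finset.prod_nonneg fun k _ => pow_nonneg (abs_nonneg _) _
  -- volume of the ball
  have hvol : volume {x : Fin n → ℝ | ∑ k, |x k| ≤ 1}
      = ENNReal.ofReal (2 ^ n / (Nat.factorial n : ℝ)) := by
    rw [vol_le 1]
    simp [Real.Gamma_nat_eq_factorial]
  -- the set lintegral
  have hmom := moment (n := n) c
  rw [hc, hC] at hmom
  set J := ∫⁻ x in {x : Fin n → ℝ | ∑ k, |x k| ≤ 1},
    ENNReal.ofReal (∏ k, |x k| ^ c k) with hJ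
  have hfactne : ((Nat.factorial (n + 4) : ENNReal)) ≠ 0 := by
    simp [Nat.factorial_ne_zero]
  have hfactnetop : ((Nat.factorial (n + 4) : ENNReal)) ≠ ⊤ := by
    simp
  have hJtop : J ≠ ⊤ := by
    intro h
    rw [h, ENNReal.mul_top hfactne] at hmom
    exact ENNReal.ofReal_ne_top hmom.symm
  have hJval : J.toReal = C / (Nat.factorial (n + 4) : ℝ) := by
    have := congrArg ENNReal.toReal hmom
    rw [ENNReal.toReal_mul, ENNReal.toReal_natCast, ENNReal.toReal_ofReal hCnn] at this
    have hfpos : (0:ℝ) < (Nat.factorial (n + 4) : ℝ) := by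
      exact_mod_cast Nat.factorial_pos _
    field_simp at this ⊢
    linarith [this]
  -- the Bochner set integral
  have hset : ∫ x in {x : Fin n → ℝ | ∑ k, |x k| ≤ 1}, f x
      = C / (Nat.factorial (n + 4) : ℝ) := by
    rw [integral_eq_lintegral_of_nonneg_ae
      (Filter.Eventually.of_forall fun x => hfnn x) hfm.aestronglyMeasurable]
    rw [show (fun x : Fin n → ℝ => ENNReal.ofReal (f x))
        = fun x : Fin n → ℝ => ENNReal.ofReal (∏ k, |x k| ^ c k) by
      funext x; rw [hfe]]
    rw [← hJ, hJval]
  rw [integral_smul_measure, hset, hvol, ← ENNReal.ofReal_inv_of_pos (by positivity),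
    ENNReal.toReal_ofReal (by positivity), smul_eq_mul]
  have h2 : (2:ℝ) ^ n ≠ 0 := by positivity
  have hn0 : (Nat.factorial n : ℝ) ≠ 0 := by
    exact_mod_cast Nat.factorial_ne_zero n
  have hf40 : (Nat.factorial (n+4) : ℝ) ≠ 0 := by
    exact_mod_cast Nat.factorial_ne_zero (n+4)
  field_simp

end CrossAux

open CrossAux

theorem stmt_2 (n : ℕ) (hn : 2 ≤ n) (i j : Fin n) (hij : i ≠ j)
    (B : Set (Fin n → ℝ)) (hB : B = {x : Fin n → ℝ | ∑ k, |x k| ≤ 1})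
    (μ : Measure (Fin n → ℝ)) (hμ : μ = (volume B)⁻¹ • volume.restrict B) :
    (∫ x, (x i) ^ 4 ∂μ)
        = 24 / (((n : ℝ) + 1) * (n + 2) * (n + 3) * (n + 4)) ∧
    (∫ x, (x i) ^ 2 * (x j) ^ 2 ∂μ)
        = 4 / (((n : ℝ) + 1) * (n + 2) * (n + 3) * (n + 4)) := by
  haveI : Nonempty (Fin n) := ⟨⟨0, by omega⟩⟩
  subst hB hμ
  have hfact : (Nat.factorial (n + 4) : ℝ)
      = ((n:ℝ) + 1) * ((n:ℝ) + 2) * ((n:ℝ) + 3) * ((n:ℝ) + 4) * (Nat.factorial n : ℝ) := by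
    have e1 : Nat.factorial (n+4)
        = (n+4) * ((n+3) * ((n+2) * ((n+1) * Nat.factorial n))) := by
      rw [show n+4 = (n+3)+1 from rfl, Nat.factorial_succ,
        show n+3 = (n+2)+1 from rfl, Nat.factorial_succ,
        show n+2 = (n+1)+1 from rfl, Nat.factorial_succ,
        Nat.factorial_succ]
    rw [e1]; push_cast; ring
  have hn0 : (Nat.factorial n : ℝ) ≠ 0 := by exact_mod_cast Nat.factorial_ne_zero n
  have hd : ((n:ℝ) + 1) * ((n:ℝ) + 2) * ((n:ℝ) + 3) * ((n:ℝ) + 4) ≠ 0 := by positivity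
  constructor
  · have h := main_calc (n := n) (fun k => if k = i then 4 else 0)
      (by simp) (C := 24 * 2 ^ n)
      (by
        have : ∀ k : Fin n, (2 * (Nat.factorial (if k = i then 4 else 0) : ℝ))
            = (if k = i then (24:ℝ) else 1) * 2 := by
          intro k; by_cases h : k = i <;> norm_num [h, Nat.factorial]
        rw [Finset.prod_congr rfl fun k _ => this k, Finset.prod_mul_distrib,
          Finset.prod_ite_eq' Finset.univ i (fun _ => (24:ℝ))]
        simp)
      (f := fun x : Fin n → ℝ => (x i) ^ 4)
      ((measurable_pi_apply i).pow_const 4)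
      (by
        intro x
        have : ∀ k : Fin n, |x k| ^ (if k = i then 4 else 0)
            = if k = i then |x k| ^ 4 else 1 := by
          intro k; by_cases h : k = i <;> simp [h]
        rw [Finset.prod_congr rfl fun k _ => this k,
          Finset.prod_ite_eq' Finset.univ i (fun k => |x k| ^ 4)]
        simp [(by decide : Even 4).pow_abs])
    rw [h, hfact]
    field_simp
  · have h := main_calc (n := n) (fun k => if k = i then 2 else if k = j then 2 else 0)
      (by
        rw [show (fun k : Fin n => if k = i then 2 else if k = j then 2 else 0)
            = fun k : Fin n => (if k = i then 2 else 0) + (if k = j then 2 else 0) by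
          funext k
          by_cases h1 : k = i
          · subst h1; simp [hij]
          · by_cases h2 : k = j <;> simp [h1, h2, Ne.symm hij]]
        rw [Finset.sum_add_distrib]
        simp)
      (C := 4 * 2 ^ n)
      (by
        have : ∀ k : Fin n, (2 * (Nat.factorial
              (if k = i then 2 else if k = j then 2 else 0) : ℝ))
            = ((if k = i then (2:ℝ) else 1) * (if k = j then (2:ℝ) else 1)) * 2 := by
          intro k
          by_cases h1 : k = i
          · subst h1; norm_num [hij, Nat.factorial]
          · by_cases h2 : k = j <;> norm_num [h1, h2, Nat.factorial, Ne.symm hij]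
        rw [Finset.prod_congr rfl fun k _ => this k, Finset.prod_mul_distrib,
          Finset.prod_mul_distrib,
          Finset.prod_ite_eq' Finset.univ i (fun _ => (2:ℝ)),
          Finset.prod_ite_eq' Finset.univ j (fun _ => (2:ℝ))]
        simp; ring)
      (f := fun x : Fin n → ℝ => (x i) ^ 2 * (x j) ^ 2)
      (((measurable_pi_apply i).pow_const 2).mul ((measurable_pi_apply j).pow_const 2))
      (by
        intro x
        have : ∀ k : Fin n, |x k| ^ (if k = i then 2 else if k = j then 2 else 0)
            = (if k = i then |x k| ^ 2 else 1) * (if k = j then |x k| ^ 2 else 1) := by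
          intro k
          by_cases h1 : k = i
          · subst h1; simp [hij]
          · by_cases h2 : k = j <;> simp [h1, h2, Ne.symm hij]
        rw [Finset.prod_congr rfl fun k _ => this k, Finset.prod_mul_distrib,
          Finset.prod_ite_eq' Finset.univ i (fun k => |x k| ^ 2),
          Finset.prod_ite_eq' Finset.univ j (fun k => |x k| ^ 2)]
        simp [(by decide : Even 2).pow_abs])
    rw [h, hfact]
    field_simp
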